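/- Let (G, w, w') be a finite connected graph with vertex weights w : V(G) → ℝ≥0 and edge weights w' : E(G) → ℝ≥0, and let {F_1, …, F_k} be a c-partition of E(G). For each i define λ_i : V(G_i) → ℝ≥0 by λ_i(X) = Σ_{x ∈ V(X)} w(x) and λ_i' : E(G_i) → ℝ≥0 by λ_i'(E) = Σ_{e ∈ Ê} w'(e), where G_i = G/F_i. Then the weighted Mostar index satisfies Mo(G, w, w') = Σ_{i=1}^{k} Mo(G_i, λ_i, λ_i'). -/

import Mathlib

open SimpleGraph

noncomputable section

/-- The Djoković–Winkler relation `Θ` on the edges of a graph `G`: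
edges `e = xy` and `f = ab` are related iff
`d(x,a) + d(y,b) ≠ d(x,b) + d(y,a)`. -/
def theta {V : Type*} (G : SimpleGraph V) (e f : Sym2 V) : Prop :=
  e ∈ G.edgeSet ∧ f ∈ G.edgeSet ∧
    ∃ x y a b : V, e = s(x, y) ∧ f = s(a, b) ∧
      G.dist x a + G.dist y b ≠ G.dist x b + G.dist y a

/-- The quotient graph `G/F`: its vertices are the connected components of
`G − F`, two components being adjacent iff some vertex of one is adjacent in
`G` to some vertex of the other. -/
def quotientGraph {V : Type*} (G : SimpleGraph V) (F : Set (Sym2 V)) :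
    SimpleGraph (G.deleteEdges F).ConnectedComponent where
  Adj X Y := X ≠ Y ∧ ∃ x y : V,
    (G.deleteEdges F).connectedComponentMk x = X ∧
    (G.deleteEdges F).connectedComponentMk y = Y ∧ G.Adj x y
  symm := by
    refine ⟨?_⟩
    rintro X Y ⟨hne, x, y, hx, hy, hadj⟩
    exact ⟨hne.symm, y, x, hy, hx, hadj.symm⟩
  loopless := by
    refine ⟨?_⟩
    rintro X ⟨hne, -⟩
    exact hne rfl

/-- `F₁, …, F_k` is a partition of the edge set of `G`. -/
def IsEdgePartition {V : Type*} (G : SimpleGraph V) {k : ℕ}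
    (F : Fin k → Set (Sym2 V)) : Prop :=
  (∀ i, F i ⊆ G.edgeSet) ∧ (∀ e ∈ G.edgeSet, ∃ i, e ∈ F i) ∧
    (∀ i j, i ≠ j → Disjoint (F i) (F j))

/-- `F₁, …, F_k` is a c-partition of the edge set of `G`: a partition such
that every `Θ*`-class (class of the transitive closure of `Θ`) is contained
in some part. -/
def IsCPartition {V : Type*} (G : SimpleGraph V) {k : ℕ}
    (F : Fin k → Set (Sym2 V)) : Prop :=
  IsEdgePartition G F ∧
    ∀ e f : Sym2 V, Relation.TransGen (theta G) e f → ∀ i, e ∈ F i → f ∈ F i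

/-- For an edge `e = uv`, `nW G w u v` is `n_u(e|(G,w))`, the sum of the
weights of the vertices strictly closer to `u` than to `v`. -/
def nW {V : Type*} (G : SimpleGraph V) (w : V → NNReal) (u v : V) : NNReal :=
  ∑ᶠ x ∈ {x : V | G.dist x u < G.dist x v}, w x

/-- The Mostar index of a vertex-edge-weighted graph `(G, w, w')`. -/
def MostarW {V : Type*} (G : SimpleGraph V) (w : V → NNReal)
    (w' : Sym2 V → NNReal) : ℝ :=
  ∑ᶠ e ∈ G.edgeSet, (w' e : ℝ) *
    Sym2.lift ⟨fun u v => |((nW G w u v : ℝ)) - ((nW G w v u : ℝ))|,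
      fun _ _ => abs_sub_comm _ _⟩ e

/-- The (unweighted) Mostar index of a graph `G`. -/
def Mostar {V : Type*} (G : SimpleGraph V) : ℝ :=
  ∑ᶠ e ∈ G.edgeSet,
    Sym2.lift ⟨fun u v =>
      |((Nat.card {x : V | G.dist x u < G.dist x v} : ℝ)) -
        ((Nat.card {x : V | G.dist x v < G.dist x u} : ℝ))|,
      fun _ _ => abs_sub_comm _ _⟩ e

-- ===================== auxiliary development =====================

set_option linter.unusedSectionVars false
namespace MostarAux

attribute [local instance] Classical.propDecidable

variable {V : Type*} [Fintype V] {G : SimpleGraph V} {k : ℕ}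
  {F : Fin k → Set (Sym2 V)}

/-- distance difference function -/
def fdiff (G : SimpleGraph V) (a b x : V) : ℤ := (G.dist x a : ℤ) - (G.dist x b : ℤ)

lemma theta_of_fdiff_ne {a b c d : V} (hab : s(a,b) ∈ G.edgeSet)
    (hcd : s(c,d) ∈ G.edgeSet) (h : fdiff G a b c ≠ fdiff G a b d) :
    theta G s(a,b) s(c,d) := by
  refine ⟨hab, hcd, a, b, c, d, rfl, rfl, ?_⟩
  intro hc
  apply h
  unfold fdiff
  rw [show G.dist c a = G.dist a c from SimpleGraph.dist_comm,
    show G.dist c b = G.dist b c from SimpleGraph.dist_comm,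
    show G.dist d a = G.dist a d from SimpleGraph.dist_comm,
    show G.dist d b = G.dist b d from SimpleGraph.dist_comm]
  omega

lemma theta_of_fdiff_ne' {a b c d : V} (hab : s(a,b) ∈ G.edgeSet)
    (hcd : s(c,d) ∈ G.edgeSet) (h : fdiff G a b c ≠ fdiff G a b d) :
    theta G s(c,d) s(a,b) := by
  refine ⟨hcd, hab, c, d, a, b, rfl, rfl, ?_⟩
  intro hc
  apply h
  unfold fdiff
  omega

lemma mem_F_of_theta (hF : IsCPartition G F) {i : Fin k} {e f : Sym2 V}
    (he : e ∈ F i) (h : theta G e f) : f ∈ F i :=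
  hF.2 e f (Relation.TransGen.single h) i he

/-- `fdiff a b` is constant on the connected components of `G - F i`,
whenever `s(a,b) ∈ F i`. -/
lemma fdiff_const (hF : IsCPartition G F) {i : Fin k} {a b : V}
    (hab : s(a,b) ∈ F i) {x y : V}
    (hxy : (G.deleteEdges (F i)).Reachable x y) :
    fdiff G a b x = fdiff G a b y := by
  obtain ⟨p⟩ := hxy
  induction p with
  | nil => rfl
  | @cons x z y h q ih =>
    have h' := (SimpleGraph.deleteEdges_adj).mp h
    have hx : fdiff G a b x = fdiff G a b z := by
      by_contra hne
      exact h'.2 (mem_F_of_theta hF hab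
        (theta_of_fdiff_ne (hF.1.1 i hab) ((G.mem_edgeSet).mpr h'.1) hne))
    rw [hx]; exact ih

/-- abbreviation for the component of a vertex -/
def qcc (G : SimpleGraph V) (F : Fin k → Set (Sym2 V)) (i : Fin k) (x : V) :
    (G.deleteEdges (F i)).ConnectedComponent :=
  (G.deleteEdges (F i)).connectedComponentMk x

lemma qcc_eq_iff {i : Fin k} {x y : V} :
    qcc G F i x = qcc G F i y ↔ (G.deleteEdges (F i)).Reachable x y :=
  SimpleGraph.ConnectedComponent.eq

lemma qcc_eq_of_not_mem {i : Fin k} {u v : V} (h : G.Adj u v)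
    (hm : s(u,v) ∉ F i) : qcc G F i u = qcc G F i v :=
  qcc_eq_iff.mpr (SimpleGraph.Adj.reachable (SimpleGraph.deleteEdges_adj.mpr ⟨h, hm⟩))

lemma qcc_ne_of_mem (hF : IsCPartition G F) {i : Fin k} {u v : V}
    (hm : s(u,v) ∈ F i) : qcc G F i u ≠ qcc G F i v := by
  intro he
  have hadj : G.Adj u v := (G.mem_edgeSet).mp (hF.1.1 i hm)
  have h1 := fdiff_const hF hm (qcc_eq_iff.mp he)
  have hd : G.dist u v = 1 := SimpleGraph.dist_eq_one_iff_adj.mpr hadj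
  have hd' : G.dist v u = 1 := by rw [SimpleGraph.dist_comm]; exact hd
  unfold fdiff at h1
  rw [G.dist_self, G.dist_self, hd, hd'] at h1
  omega

lemma Q_adj_of_mem (hF : IsCPartition G F) {i : Fin k} {u v : V}
    (hm : s(u,v) ∈ F i) :
    (quotientGraph G (F i)).Adj (qcc G F i u) (qcc G F i v) :=
  ⟨qcc_ne_of_mem hF hm, u, v, rfl, rfl, (G.mem_edgeSet).mp (hF.1.1 i hm)⟩

lemma Q_connected (hF : IsCPartition G F) (hG : G.Connected) (i : Fin k) :
    (quotientGraph G (F i)).Connected := by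
  haveI hne : Nonempty V := hG.nonempty
  haveI : Nonempty ((G.deleteEdges (F i)).ConnectedComponent) :=
    ⟨(G.deleteEdges (F i)).connectedComponentMk (Classical.arbitrary V)⟩
  refine ⟨?_⟩
  intro X Y
  refine SimpleGraph.ConnectedComponent.ind₂ (fun x y => ?_) X Y
  obtain ⟨p⟩ := hG.preconnected x y
  induction p with
  | nil => exact SimpleGraph.Reachable.refl _
  | @cons x z y h q ih =>
    refine SimpleGraph.Reachable.trans ?_ ih
    by_cases hm : s(x,z) ∈ F i
    · exact (SimpleGraph.Adj.reachable
        (⟨qcc_ne_of_mem hF hm, x, z, rfl, rfl, h⟩ :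
          (quotientGraph G (F i)).Adj _ _))
    · rw [show (G.deleteEdges (F i)).connectedComponentMk x =
        (G.deleteEdges (F i)).connectedComponentMk z from
          qcc_eq_of_not_mem h hm]

-- chunk 2 (appended to dev1 before `end MostarAux`)

/-- number of `F i`-edges on a walk -/
def fcnt (F : Fin k → Set (Sym2 V)) (i : Fin k) {x y : V} (p : G.Walk x y) : ℕ :=
  (p.darts.filter (fun D => s(D.fst, D.snd) ∈ F i)).length

lemma fcnt_nil {i : Fin k} {x : V} : fcnt F i (SimpleGraph.Walk.nil : G.Walk x x) = 0 := rfl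

lemma fcnt_cons {i : Fin k} {x z y : V} (h : G.Adj x z) (q : G.Walk z y) :
    fcnt F i (SimpleGraph.Walk.cons h q) =
      (if s(x,z) ∈ F i then 1 else 0) + fcnt F i q := by
  unfold fcnt
  rw [SimpleGraph.Walk.darts_cons, List.filter_cons]
  by_cases hm : s(x,z) ∈ F i <;> simp [hm] <;> omega

lemma qdist_le_fcnt (hF : IsCPartition G F) (hG : G.Connected) (i : Fin k)
    {x y : V} (p : G.Walk x y) :
    (quotientGraph G (F i)).dist (qcc G F i x) (qcc G F i y) ≤ fcnt F i p := by
  induction p with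
  | nil => simp [SimpleGraph.dist_self]
  | @cons x z y h q ih =>
    rw [fcnt_cons]
    by_cases hm : s(x,z) ∈ F i
    · have h1 : (quotientGraph G (F i)).dist (qcc G F i x) (qcc G F i z) ≤ 1 :=
        le_of_eq (SimpleGraph.dist_eq_one_iff_adj.mpr (Q_adj_of_mem hF hm))
      have h2 := (Q_connected hF hG i).dist_triangle
        (u := qcc G F i x) (v := qcc G F i z) (w := qcc G F i y)
      simp only [if_pos hm]
      omega
    · rw [if_neg hm, qcc_eq_of_not_mem h hm]
      omega

/-- every dart on a geodesic splits the distance -/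
lemma dart_dist (hG : G.Connected) {x y : V} (p : G.Walk x y)
    (hp : p.length = G.dist x y) :
    ∀ D ∈ p.darts, G.dist x D.fst + (1 + G.dist D.snd y) = G.dist x y := by
  induction p with
  | nil => simp
  | @cons x w y h q ih =>
    intro D hD
    have hxw : G.dist x w = 1 := SimpleGraph.dist_eq_one_iff_adj.mpr h
    have hq : q.length = G.dist w y := by
      have h1 : G.dist w y ≤ q.length := SimpleGraph.dist_le q
      have h2 : G.dist x y ≤ G.dist x w + G.dist w y := hG.dist_triangle
      simp only [SimpleGraph.Walk.length_cons] at hp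
      omega
    rw [SimpleGraph.Walk.darts_cons, List.mem_cons] at hD
    rcases hD with rfl | hD
    · simp only [SimpleGraph.dist_self]
      simp only [SimpleGraph.Walk.length_cons] at hp
      omega
    · have ih' := ih hq D hD
      have hDadj : G.dist D.fst D.snd = 1 := SimpleGraph.dist_eq_one_iff_adj.mpr D.adj
      have hA : G.dist x D.fst ≤ G.dist x w + G.dist w D.fst := hG.dist_triangle
      have hB : G.dist x y ≤ G.dist x D.fst + G.dist D.fst y := hG.dist_triangle
      have hC : G.dist D.fst y ≤ G.dist D.fst D.snd + G.dist D.snd y := hG.dist_triangle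
      have hxy : G.dist x y = 1 + G.dist w y := by
        simp only [SimpleGraph.Walk.length_cons] at hp
        omega
      omega

lemma fdiff_dart_start (hG : G.Connected) {x y : V} (p : G.Walk x y)
    (hp : p.length = G.dist x y) {D : G.Dart} (hD : D ∈ p.darts) :
    fdiff G D.fst D.snd x = -1 := by
  have key := dart_dist hG p hp D hD
  have t1 : G.dist x D.snd ≤ G.dist x D.fst + G.dist D.fst D.snd := hG.dist_triangle
  have t2 : G.dist x y ≤ G.dist x D.snd + G.dist D.snd y := hG.dist_triangle
  have hDadj : G.dist D.fst D.snd = 1 := SimpleGraph.dist_eq_one_iff_adj.mpr D.adj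
  unfold fdiff
  omega

lemma fdiff_dart_end (hG : G.Connected) {x y : V} (p : G.Walk x y)
    (hp : p.length = G.dist x y) {D : G.Dart} (hD : D ∈ p.darts) :
    fdiff G D.fst D.snd y = 1 := by
  have key := dart_dist hG p hp D hD
  have t1 : G.dist D.fst y ≤ G.dist D.fst D.snd + G.dist D.snd y := hG.dist_triangle
  have t2 : G.dist x y ≤ G.dist x D.fst + G.dist D.fst y := hG.dist_triangle
  have hDadj : G.dist D.fst D.snd = 1 := SimpleGraph.dist_eq_one_iff_adj.mpr D.adj
  have e1 : G.dist y D.fst = G.dist D.fst y := SimpleGraph.dist_comm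
  have e2 : G.dist y D.snd = G.dist D.snd y := SimpleGraph.dist_comm
  unfold fdiff
  omega

-- list helpers
lemma list_map_sum_const {α : Type*} (l : List α) (f : α → ℤ) (c : ℤ)
    (h : ∀ a ∈ l, f a = c) : (l.map f).sum = c * l.length := by
  induction l with
  | nil => simp
  | cons a t ih =>
    simp only [List.map_cons, List.sum_cons, List.length_cons,
      h a List.mem_cons_self, ih (fun b hb => h b (List.mem_cons_of_mem a hb))]
    push_cast
    ring

lemma list_map_sum_congr {α : Type*} (l : List α) (f g : α → ℤ)
    (h : ∀ a ∈ l, f a = g a) : (l.map f).sum = (l.map g).sum := by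
  induction l with
  | nil => rfl
  | cons a t ih =>
    simp only [List.map_cons, List.sum_cons,
      h a List.mem_cons_self, ih (fun b hb => h b (List.mem_cons_of_mem a hb))]

lemma list_map_sum_sub {α : Type*} (l : List α) (f g : α → ℤ) :
    (l.map (fun a => f a - g a)).sum = (l.map f).sum - (l.map g).sum := by
  induction l with
  | nil => simp
  | cons a t ih => simp only [List.map_cons, List.sum_cons, ih]; ring

lemma list_filter_map_sum {α : Type*} (l : List α) (q : α → Prop)
    (t : α → ℤ) (h0 : ∀ a ∈ l, ¬ q a → t a = 0) :
    ((l.filter (fun a => q a)).map t).sum = (l.map t).sum := by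
  induction l with
  | nil => rfl
  | cons a tl ih =>
    rw [List.filter_cons]
    by_cases hq : q a
    · have h1 : (if decide (q a) = true then a :: List.filter (fun a => decide (q a)) tl
          else List.filter (fun a => decide (q a)) tl)
          = a :: List.filter (fun a => decide (q a)) tl := by
        simp [hq]
      rw [h1, List.map_cons, List.sum_cons,
        ih (fun b hb => h0 b (List.mem_cons_of_mem a hb)), List.map_cons, List.sum_cons]
    · have h1 : (if decide (q a) = true then a :: List.filter (fun a => decide (q a)) tl
          else List.filter (fun a => decide (q a)) tl)
          = List.filter (fun a => decide (q a)) tl := by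
        simp [hq]
      rw [h1, ih (fun b hb => h0 b (List.mem_cons_of_mem a hb)), List.map_cons,
        List.sum_cons, h0 a List.mem_cons_self hq]
      ring

lemma walk_telescope {x y : V} (p : G.Walk x y) (η : V → ℤ) :
    (p.darts.map (fun D => η D.fst - η D.snd)).sum = η x - η y := by
  induction p with
  | nil => simp
  | @cons x w y h q ih =>
    rw [SimpleGraph.Walk.darts_cons, List.map_cons, List.sum_cons, ih]
    ring

/-- the potential function -/
def phi (F : Fin k → Set (Sym2 V)) (i : Fin k) {x y : V} (p : G.Walk x y)
    (z : V) : ℤ :=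
  ((p.darts.filter (fun D => s(D.fst, D.snd) ∈ F i)).map
    (fun D => fdiff G D.fst D.snd z)).sum

lemma phi_start (hG : G.Connected) {i : Fin k} {x y : V} (p : G.Walk x y)
    (hp : p.length = G.dist x y) : phi F i p x = -(fcnt F i p : ℤ) := by
  unfold phi fcnt
  rw [list_map_sum_const _ _ (-1) (fun D hD => by
    rw [List.mem_filter] at hD
    exact fdiff_dart_start hG p hp hD.1)]
  ring

lemma phi_end (hG : G.Connected) {i : Fin k} {x y : V} (p : G.Walk x y)
    (hp : p.length = G.dist x y) : phi F i p y = (fcnt F i p : ℤ) := by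
  unfold phi fcnt
  rw [list_map_sum_const _ _ 1 (fun D hD => by
    rw [List.mem_filter] at hD
    exact fdiff_dart_end hG p hp hD.1)]
  ring

lemma phi_const (hF : IsCPartition G F) {i : Fin k} {x y : V} (p : G.Walk x y)
    {z z' : V} (hzz : (G.deleteEdges (F i)).Reachable z z') :
    phi F i p z = phi F i p z' := by
  unfold phi
  refine list_map_sum_congr _ _ _ (fun D hD => ?_)
  rw [List.mem_filter] at hD
  have hmem : s(D.fst, D.snd) ∈ F i := by
    have := hD.2; simpa using this
  exact fdiff_const hF hmem hzz

lemma abs_fdiff_le_one (hG : G.Connected) {c d : V} (hcd : G.Adj c d) (v : V) :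
    -1 ≤ fdiff G c d v ∧ fdiff G c d v ≤ 1 := by
  have h1 : G.dist v c ≤ G.dist v d + G.dist d c := hG.dist_triangle
  have h2 : G.dist v d ≤ G.dist v c + G.dist c d := hG.dist_triangle
  have h3 : G.dist c d = 1 := SimpleGraph.dist_eq_one_iff_adj.mpr hcd
  have h4 : G.dist d c = 1 := by rw [SimpleGraph.dist_comm]; exact h3
  unfold fdiff
  omega

lemma phi_lip (hF : IsCPartition G F) (hG : G.Connected) {i : Fin k}
    {x y : V} (p : G.Walk x y) {c d : V} (hcd : G.Adj c d) :
    |phi F i p c - phi F i p d| ≤ 2 := by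
  classical
  set l := p.darts.filter (fun D => s(D.fst, D.snd) ∈ F i) with hl
  have hsub : phi F i p c - phi F i p d =
      (l.map (fun D => fdiff G D.fst D.snd c - fdiff G D.fst D.snd d)).sum := by
    rw [list_map_sum_sub]; rfl
  by_cases hall : ∀ D ∈ l, fdiff G D.fst D.snd c = fdiff G D.fst D.snd d
  · rw [hsub, list_map_sum_const _ _ 0 (fun D hD => by rw [hall D hD]; ring)]
    simp
  · push_neg at hall
    obtain ⟨D₀, hD₀, hne₀⟩ := hall
    have hD₀F : s(D₀.fst, D₀.snd) ∈ F i := by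
      have := (List.mem_filter.mp hD₀).2; simpa using this
    have hcdF : s(c,d) ∈ F i :=
      mem_F_of_theta hF hD₀F
        (theta_of_fdiff_ne ((G.mem_edgeSet).mpr D₀.adj) ((G.mem_edgeSet).mpr hcd) hne₀)
    have hext : (l.map (fun D => fdiff G D.fst D.snd c - fdiff G D.fst D.snd d)).sum
        = (p.darts.map (fun D => fdiff G D.fst D.snd c - fdiff G D.fst D.snd d)).sum := by
      rw [hl]
      refine list_filter_map_sum _ _ _ (fun D hD hq => ?_)
      by_contra hne
      have hne' : fdiff G D.fst D.snd c ≠ fdiff G D.fst D.snd d := fun hc => hne (by rw [hc]; ring)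
      exact hq (mem_F_of_theta hF hcdF
        (theta_of_fdiff_ne' ((G.mem_edgeSet).mpr D.adj) ((G.mem_edgeSet).mpr hcd) hne'))
    have hcong : (p.darts.map (fun D => fdiff G D.fst D.snd c - fdiff G D.fst D.snd d)).sum
        = (p.darts.map (fun D => fdiff G c d D.fst - fdiff G c d D.snd)).sum := by
      refine list_map_sum_congr _ _ _ (fun D hD => ?_)
      unfold fdiff
      have e1 : G.dist c D.fst = G.dist D.fst c := SimpleGraph.dist_comm
      have e2 : G.dist c D.snd = G.dist D.snd c := SimpleGraph.dist_comm
      have e3 : G.dist d D.fst = G.dist D.fst d := SimpleGraph.dist_comm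
      have e4 : G.dist d D.snd = G.dist D.snd d := SimpleGraph.dist_comm
      omega
    have htel := walk_telescope p (fun v => fdiff G c d v)
    rw [hsub, hext, hcong, htel]
    have b1 := abs_fdiff_le_one hG hcd x
    have b2 := abs_fdiff_le_one hG hcd y
    rw [abs_le]
    omega

lemma phi_walk_bound (hF : IsCPartition G F) (hG : G.Connected) {i : Fin k}
    {x y : V} (p : G.Walk x y) :
    ∀ {X Y : (G.deleteEdges (F i)).ConnectedComponent}
      (q : (quotientGraph G (F i)).Walk X Y) {z w : V},
      qcc G F i z = X → qcc G F i w = Y →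
      |phi F i p z - phi F i p w| ≤ 2 * q.length := by
  intro X Y q
  induction q with
  | nil =>
    intro z w hz hw
    have : phi F i p z = phi F i p w :=
      phi_const hF p (qcc_eq_iff.mp (hz.trans hw.symm))
    simp [this]
  | @cons X Z Y h q ih =>
    intro z w hz hw
    obtain ⟨-, c, d, hc, hd, hcd⟩ := id h
    have h1 : phi F i p z = phi F i p c :=
      phi_const hF p (qcc_eq_iff.mp (hz.trans hc.symm))
    have h2 : |phi F i p c - phi F i p d| ≤ 2 := phi_lip hF hG p hcd
    have h3 : |phi F i p d - phi F i p w| ≤ 2 * q.length := ih hd hw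
    have h4 : |phi F i p z - phi F i p w| ≤
        |phi F i p c - phi F i p d| + |phi F i p d - phi F i p w| := by
      rw [h1]
      exact (abs_sub_le _ _ _)
    rw [SimpleGraph.Walk.length_cons]
    push_cast
    omega

lemma fcnt_le_qdist (hF : IsCPartition G F) (hG : G.Connected) {i : Fin k}
    {x y : V} (p : G.Walk x y) (hp : p.length = G.dist x y) :
    fcnt F i p ≤ (quotientGraph G (F i)).dist (qcc G F i x) (qcc G F i y) := by
  obtain ⟨q, hq⟩ := ((Q_connected hF hG i).preconnected (qcc G F i x)
    (qcc G F i y)).exists_walk_length_eq_dist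
  have hb := phi_walk_bound hF hG p q rfl rfl
  rw [phi_start hG p hp, phi_end hG p hp, hq] at hb
  have : |-(fcnt F i p : ℤ) - (fcnt F i p : ℤ)| = 2 * (fcnt F i p : ℤ) := by
    rw [abs_of_nonpos (by omega)]; ring
  rw [this] at hb
  omega

lemma qdist_eq_fcnt (hF : IsCPartition G F) (hG : G.Connected) {i : Fin k}
    {x y : V} (p : G.Walk x y) (hp : p.length = G.dist x y) :
    (quotientGraph G (F i)).dist (qcc G F i x) (qcc G F i y) = fcnt F i p :=
  le_antisymm (qdist_le_fcnt hF hG i p) (fcnt_le_qdist hF hG p hp)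

lemma length_eq_sum_fcnt (hF : IsCPartition G F) {x y : V} (p : G.Walk x y) :
    p.length = ∑ i : Fin k, fcnt F i p := by
  induction p with
  | nil => simp [fcnt_nil]
  | @cons x z y h q ih =>
    have hcov : ∃ i₀ : Fin k, s(x,z) ∈ F i₀ :=
      hF.1.2.1 _ ((G.mem_edgeSet).mpr h)
    obtain ⟨i₀, hi₀⟩ := hcov
    have hsum : ∑ i : Fin k, (if s(x,z) ∈ F i then (1:ℕ) else 0) = 1 := by
      rw [Finset.sum_eq_single_of_mem i₀ (Finset.mem_univ i₀)
        (fun j _ hj => by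
          rw [if_neg]
          intro hjm
          exact (Set.disjoint_left.mp (hF.1.2.2 j i₀ hj) hjm) hi₀)]
      rw [if_pos hi₀]
    calc (SimpleGraph.Walk.cons h q).length = 1 + q.length := by
          rw [SimpleGraph.Walk.length_cons]; omega
      _ = ∑ i : Fin k, ((if s(x,z) ∈ F i then (1:ℕ) else 0) + fcnt F i q) := by
          rw [Finset.sum_add_distrib, hsum, ih]
      _ = ∑ i : Fin k, fcnt F i (SimpleGraph.Walk.cons h q) := by
          refine Finset.sum_congr rfl (fun i _ => ?_)
          rw [fcnt_cons]

/-- Graham–Winkler: distance is the sum of quotient distances -/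
lemma dist_eq_sum_qdist (hF : IsCPartition G F) (hG : G.Connected) (x y : V) :
    G.dist x y = ∑ i : Fin k,
      (quotientGraph G (F i)).dist (qcc G F i x) (qcc G F i y) := by
  obtain ⟨p, hp⟩ := (hG.preconnected x y).exists_walk_length_eq_dist
  rw [← hp, length_eq_sum_fcnt hF p]
  exact Finset.sum_congr rfl (fun i _ => (qdist_eq_fcnt hF hG p hp))|>.symm

-- chunk 3

/-- The main lemma: for an edge `uv ∈ F i`, the distance-difference to `u` vs `v`
equals the quotient distance-difference. -/
lemma key_lemma (hF : IsCPartition G F) (hG : G.Connected) {i : Fin k} {u v : V}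
    (hm : s(u,v) ∈ F i) (x : V) :
    (G.dist x u : ℤ) - G.dist x v =
      ((quotientGraph G (F i)).dist (qcc G F i x) (qcc G F i u) : ℤ) -
      ((quotientGraph G (F i)).dist (qcc G F i x) (qcc G F i v) : ℤ) := by
  have h1 := dist_eq_sum_qdist hF hG x u
  have h2 := dist_eq_sum_qdist hF hG x v
  have hj : ∀ j, j ≠ i → qcc G F j u = qcc G F j v := fun j hji =>
    qcc_eq_of_not_mem ((G.mem_edgeSet).mp (hF.1.1 i hm))
      (fun hmem => Set.disjoint_left.mp (hF.1.2.2 j i hji) hmem hm)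
  rw [h1, h2]
  push_cast
  rw [← Finset.sum_sub_distrib]
  rw [Finset.sum_eq_single_of_mem i (Finset.mem_univ i)
    (fun j _ hji => by rw [hj j hji]; ring)]

lemma dist_lt_iff (hF : IsCPartition G F) (hG : G.Connected) {i : Fin k}
    {u v : V} (hm : s(u,v) ∈ F i) (x : V) :
    G.dist x u < G.dist x v ↔
      (quotientGraph G (F i)).dist (qcc G F i x) (qcc G F i u) <
      (quotientGraph G (F i)).dist (qcc G F i x) (qcc G F i v) := by
  have := key_lemma hF hG hm x
  omega

lemma nW_eq (hF : IsCPartition G F) (hG : G.Connected) {i : Fin k}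
    (w : V → NNReal) {u v : V} (hm : s(u,v) ∈ F i) :
    nW G w u v = nW (quotientGraph G (F i))
      (fun X => ∑ᶠ x ∈ {x : V |
        (G.deleteEdges (F i)).connectedComponentMk x = X}, w x)
      (qcc G F i u) (qcc G F i v) := by
  classical
  unfold nW
  set S : Set V := {x : V | G.dist x u < G.dist x v} with hS
  set T : Set ((G.deleteEdges (F i)).ConnectedComponent) :=
    {X | (quotientGraph G (F i)).dist X (qcc G F i u) <
         (quotientGraph G (F i)).dist X (qcc G F i v)} with hT
  rw [finsum_mem_eq_finite_toFinset_sum _ S.toFinite,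
      finsum_mem_eq_finite_toFinset_sum _ T.toFinite]
  have hmaps : ∀ x ∈ S.toFinite.toFinset, qcc G F i x ∈ T.toFinite.toFinset := by
    intro x hx
    rw [Set.Finite.mem_toFinset] at hx ⊢
    exact (dist_lt_iff hF hG hm x).mp hx
  rw [← Finset.sum_fiberwise_of_maps_to hmaps w]
  refine Finset.sum_congr rfl (fun X hX => ?_)
  rw [Set.Finite.mem_toFinset] at hX
  rw [finsum_mem_eq_finite_toFinset_sum _ (Set.toFinite _)]
  refine Finset.sum_congr ?_ (fun _ _ => rfl)
  ext x
  constructor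
  · intro hx
    rw [Finset.mem_filter] at hx
    rw [Set.Finite.mem_toFinset, Set.mem_setOf_eq]
    exact hx.2
  · intro hx
    rw [Set.Finite.mem_toFinset, Set.mem_setOf_eq] at hx
    rw [Finset.mem_filter, Set.Finite.mem_toFinset]
    refine ⟨?_, hx⟩
    rw [hS, Set.mem_setOf_eq, dist_lt_iff hF hG hm x]
    have hq : qcc G F i x = X := hx
    rw [hq]
    exact hX

-- chunk 4: final assembly

lemma phi_mem (hF : IsCPartition G F) {i : Fin k} :
    ∀ e : Sym2 V, e ∈ F i →
      Sym2.map ((G.deleteEdges (F i)).connectedComponentMk) e ∈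
        (quotientGraph G (F i)).edgeSet := by
  intro e
  induction e using Sym2.ind with
  | _ u v =>
    intro hm
    rw [Sym2.map_pair_eq, SimpleGraph.mem_edgeSet]
    exact Q_adj_of_mem hF hm

lemma fiber_F (hF : IsCPartition G F) {i : Fin k} :
    ∀ e : Sym2 V, e ∈ G.edgeSet →
      Sym2.map ((G.deleteEdges (F i)).connectedComponentMk) e ∈
        (quotientGraph G (F i)).edgeSet → e ∈ F i := by
  intro e
  induction e using Sym2.ind with
  | _ u v =>
    intro he hE
    by_contra hne
    rw [Sym2.map_pair_eq, SimpleGraph.mem_edgeSet] at hE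
    exact hE.1 (qcc_eq_of_not_mem ((G.mem_edgeSet).mp he) hne)

lemma tval (hF : IsCPartition G F) (hG : G.Connected) (w : V → NNReal) {i : Fin k} :
    ∀ e : Sym2 V, e ∈ F i →
      Sym2.lift ⟨fun a b => |((nW G w a b : ℝ)) - ((nW G w b a : ℝ))|,
        fun _ _ => abs_sub_comm _ _⟩ e
      = Sym2.lift ⟨fun X Y =>
          |((nW (quotientGraph G (F i))
              (fun X => ∑ᶠ x ∈ {x : V |
                (G.deleteEdges (F i)).connectedComponentMk x = X}, w x) X Y : ℝ)) -
           ((nW (quotientGraph G (F i))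
              (fun X => ∑ᶠ x ∈ {x : V |
                (G.deleteEdges (F i)).connectedComponentMk x = X}, w x) Y X : ℝ))|,
          fun _ _ => abs_sub_comm _ _⟩
          (Sym2.map ((G.deleteEdges (F i)).connectedComponentMk) e) := by
  intro e
  induction e using Sym2.ind with
  | _ u v =>
    intro hm
    have hm' : s(v,u) ∈ F i := by rwa [Sym2.eq_swap]
    rw [Sym2.map_pair_eq, Sym2.lift_mk, Sym2.lift_mk]
    show |((nW G w u v : ℝ)) - ((nW G w v u : ℝ))| =
      |((nW (quotientGraph G (F i))
          (fun X => ∑ᶠ x ∈ {x : V |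
            (G.deleteEdges (F i)).connectedComponentMk x = X}, w x)
          ((G.deleteEdges (F i)).connectedComponentMk u)
          ((G.deleteEdges (F i)).connectedComponentMk v) : ℝ)) -
       ((nW (quotientGraph G (F i))
          (fun X => ∑ᶠ x ∈ {x : V |
            (G.deleteEdges (F i)).connectedComponentMk x = X}, w x)
          ((G.deleteEdges (F i)).connectedComponentMk v)
          ((G.deleteEdges (F i)).connectedComponentMk u) : ℝ))|
    rw [nW_eq hF hG w hm, nW_eq hF hG w hm']
    rfl

lemma per_part (hF : IsCPartition G F) (hG : G.Connected)
    (w : V → NNReal) (w' : Sym2 V → NNReal) (i : Fin k) :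
    ∑ e ∈ (G.edgeSet.toFinite.toFinset.filter (fun e => e ∈ F i)),
      ((w' e : ℝ) * Sym2.lift ⟨fun a b => |((nW G w a b : ℝ)) - ((nW G w b a : ℝ))|,
        fun _ _ => abs_sub_comm _ _⟩ e)
    = MostarW (quotientGraph G (F i))
        (fun X => ∑ᶠ x ∈ {x : V |
            (G.deleteEdges (F i)).connectedComponentMk x = X}, w x)
        (fun E => ∑ᶠ e ∈ {e : Sym2 V | e ∈ G.edgeSet ∧
            Sym2.map ((G.deleteEdges (F i)).connectedComponentMk) e = E},
          w' e) := by
  classical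
  unfold MostarW
  rw [finsum_mem_eq_finite_toFinset_sum _ ((quotientGraph G (F i)).edgeSet.toFinite)]
  have hmaps : ∀ e ∈ G.edgeSet.toFinite.toFinset.filter (fun e => e ∈ F i),
      Sym2.map ((G.deleteEdges (F i)).connectedComponentMk) e ∈
        (quotientGraph G (F i)).edgeSet.toFinite.toFinset := by
    intro e he
    rw [Finset.mem_filter] at he
    rw [Set.Finite.mem_toFinset]
    exact phi_mem hF e he.2
  rw [← Finset.sum_fiberwise_of_maps_to hmaps]
  refine Finset.sum_congr rfl (fun E hE => ?_)
  rw [Set.Finite.mem_toFinset] at hE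
  -- fiber finset equality
  have hfib : (G.edgeSet.toFinite.toFinset.filter (fun e => e ∈ F i)).filter
      (fun e => Sym2.map ((G.deleteEdges (F i)).connectedComponentMk) e = E)
      = ({e : Sym2 V | e ∈ G.edgeSet ∧
          Sym2.map ((G.deleteEdges (F i)).connectedComponentMk) e = E}).toFinite.toFinset := by
    ext e
    rw [Finset.mem_filter, Finset.mem_filter, Set.Finite.mem_toFinset,
      Set.Finite.mem_toFinset, Set.mem_setOf_eq]
    constructor
    · rintro ⟨⟨he, -⟩, hphi⟩
      exact ⟨he, hphi⟩
    · rintro ⟨he, hphi⟩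
      refine ⟨⟨he, ?_⟩, hphi⟩
      exact fiber_F hF e he (hphi ▸ hE)
  rw [hfib]
  -- value
  have hval : ∀ e ∈ ({e : Sym2 V | e ∈ G.edgeSet ∧
      Sym2.map ((G.deleteEdges (F i)).connectedComponentMk) e = E}).toFinite.toFinset,
      (w' e : ℝ) * Sym2.lift ⟨fun a b => |((nW G w a b : ℝ)) - ((nW G w b a : ℝ))|,
        fun _ _ => abs_sub_comm _ _⟩ e
      = (w' e : ℝ) * Sym2.lift ⟨fun X Y =>
          |((nW (quotientGraph G (F i))
              (fun X => ∑ᶠ x ∈ {x : V |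
                (G.deleteEdges (F i)).connectedComponentMk x = X}, w x) X Y : ℝ)) -
           ((nW (quotientGraph G (F i))
              (fun X => ∑ᶠ x ∈ {x : V |
                (G.deleteEdges (F i)).connectedComponentMk x = X}, w x) Y X : ℝ))|,
          fun _ _ => abs_sub_comm _ _⟩ E := by
    intro e he
    rw [Set.Finite.mem_toFinset, Set.mem_setOf_eq] at he
    have heF : e ∈ F i := fiber_F hF e he.1 (he.2 ▸ hE)
    rw [tval hF hG w e heF, he.2]
  rw [Finset.sum_congr rfl hval, ← Finset.sum_mul]
  beta_reduce
  rw [finsum_mem_eq_finite_toFinset_sum (fun e => w' e)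
      ({e : Sym2 V | e ∈ G.edgeSet ∧
        Sym2.map ((G.deleteEdges (F i)).connectedComponentMk) e = E}).toFinite,
    NNReal.coe_sum]

end MostarAux

open MostarAux

/-- the weighted Mostar index of a finite connected weighted graph
`(G, w, w')` equals the sum over a c-partition `{F₁, …, F_k}` of the weighted
Mostar indices of the quotient graphs `(G_i, λ_i, λ_i')`, where
`λ_i(X) = Σ_{x ∈ X} w(x)` and `λ_i'(E) = Σ_{e ∈ Ê} w'(e)`. -/
theorem mostarW_eq_sum_quotients {V : Type*} [Fintype V] (G : SimpleGraph V)
    (hG : G.Connected) (w : V → NNReal) (w' : Sym2 V → NNReal) {k : ℕ}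
    (F : Fin k → Set (Sym2 V)) (hF : IsCPartition G F) :
    MostarW G w w' = ∑ i : Fin k,
      MostarW (quotientGraph G (F i))
        (fun X => ∑ᶠ x ∈ {x : V |
            (G.deleteEdges (F i)).connectedComponentMk x = X}, w x)
        (fun E => ∑ᶠ e ∈ {e : Sym2 V | e ∈ G.edgeSet ∧
            Sym2.map ((G.deleteEdges (F i)).connectedComponentMk) e = E},
          w' e) := by
  classical
  have hLHS : MostarW G w w' = ∑ e ∈ G.edgeSet.toFinite.toFinset,
      ((w' e : ℝ) * Sym2.lift ⟨fun a b => |((nW G w a b : ℝ)) - ((nW G w b a : ℝ))|,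
        fun _ _ => abs_sub_comm _ _⟩ e) := by
    unfold MostarW
    exact finsum_mem_eq_finite_toFinset_sum _ _
  rw [hLHS]
  have h1 : ∀ e ∈ G.edgeSet.toFinite.toFinset,
      ((w' e : ℝ) * Sym2.lift ⟨fun a b => |((nW G w a b : ℝ)) - ((nW G w b a : ℝ))|,
        fun _ _ => abs_sub_comm _ _⟩ e)
      = ∑ i : Fin k, (if e ∈ F i then
          ((w' e : ℝ) * Sym2.lift ⟨fun a b => |((nW G w a b : ℝ)) - ((nW G w b a : ℝ))|,
            fun _ _ => abs_sub_comm _ _⟩ e) else 0) := by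
    intro e he
    rw [Set.Finite.mem_toFinset] at he
    obtain ⟨i₀, hi₀⟩ := hF.1.2.1 e he
    rw [Finset.sum_eq_single_of_mem i₀ (Finset.mem_univ i₀)
      (fun j _ hj => if_neg
        (fun hm => Set.disjoint_left.mp (hF.1.2.2 j i₀ hj) hm hi₀)),
      if_pos hi₀]
  rw [Finset.sum_congr rfl h1, Finset.sum_comm]
  refine Finset.sum_congr rfl (fun i _ => ?_)
  rw [← Finset.sum_filter]
  exact per_part hF hG w w' i
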